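/- Let F be a family of hash functions from M to Z, and H an SU₂ family from Z to T, with M, Z, T finite. If F is ε'-almost universal₂, then the composition family G = H ∘ F (all compositions h ∘ f with h ∈ H, f ∈ F) is ε-almost strongly universal₂ with ε = ε'(1 - 1/|T|) + 1/|T|. -/

import Mathlib

open Finset

lemma card_filter_prod_eq_sum {I J : Type*} [Fintype I] [Fintype J]
    (P : I → J → Prop) [∀ i j, Decidable (P i j)] :
    (univ.filter fun p : I × J => P p.1 p.2).card
      = ∑ i : I, (univ.filter fun j => P i j).card := by
  rw [Finset.card_filter, Fintype.sum_prod_type]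
  exact Finset.sum_congr rfl fun i _ => (Finset.card_filter _ _).symm

/-- Composition theorem ("if" direction): if `F` (indexed by `I`) is an `ε'`-almost
universal₂ family of hash functions `M → Z` and `H` (indexed by `J`) is a strongly
universal₂ family `Z → T`, then the composed family `G = H ∘ F` (indexed by `I × J`) is
`ε`-almost strongly universal₂ with `ε = ε'(1 - 1/|T|) + 1/|T|`. -/
theorem stmt7 (M Z T I J : Type*) [Fintype M] [Fintype Z] [Fintype T]
    [Fintype I] [Fintype J] [DecidableEq Z] [DecidableEq T]
    (F : I → M → Z) (H : J → Z → T) (ε' : ℝ)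
    (hSU2a : ∀ z t, ((univ.filter fun j => H j z = t).card : ℝ)
        = (Fintype.card J : ℝ) / Fintype.card T)
    (hSU2b : ∀ z₁ z₂ t₁ t₂, z₁ ≠ z₂ →
        ((univ.filter fun j => H j z₁ = t₁ ∧ H j z₂ = t₂).card : ℝ)
          = (Fintype.card J : ℝ) / (Fintype.card T : ℝ) ^ 2)
    (hAU2 : ∀ m₁ m₂ : M, m₁ ≠ m₂ →
        ((univ.filter fun i => F i m₁ = F i m₂).card : ℝ) ≤ ε' * Fintype.card I) :
    (∀ (m : M) (t : T),
        ((univ.filter fun p : I × J => H p.2 (F p.1 m) = t).card : ℝ)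
          = (Fintype.card I : ℝ) * Fintype.card J / Fintype.card T)
    ∧ (∀ (m₁ m₂ : M) (t₁ t₂ : T), m₁ ≠ m₂ →
        ((univ.filter fun p : I × J =>
            H p.2 (F p.1 m₁) = t₁ ∧ H p.2 (F p.1 m₂) = t₂).card : ℝ)
          ≤ (ε' * (1 - 1 / Fintype.card T) + 1 / Fintype.card T)
              * ((Fintype.card I : ℝ) * Fintype.card J) / Fintype.card T) := by
  constructor
  · intro m t
    rw [card_filter_prod_eq_sum (fun i j => H j (F i m) = t)]
    push_cast
    rw [Finset.sum_congr rfl (fun i _ => hSU2a (F i m) t)]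
    rw [Finset.sum_const, nsmul_eq_mul, Finset.card_univ]
    ring
  · intro m₁ m₂ t₁ t₂ hm
    have hT : (1 : ℝ) ≤ Fintype.card T := by
      have : 0 < Fintype.card T := Fintype.card_pos_iff.mpr ⟨t₁⟩
      exact_mod_cast this
    have hJ : (0 : ℝ) ≤ Fintype.card J := by positivity
    rw [card_filter_prod_eq_sum (fun i j => H j (F i m₁) = t₁ ∧ H j (F i m₂) = t₂)]
    push_cast
    have hbound : ∀ i : I, ((univ.filter fun j =>
        H j (F i m₁) = t₁ ∧ H j (F i m₂) = t₂).card : ℝ)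
        ≤ if F i m₁ = F i m₂ then (Fintype.card J : ℝ) / Fintype.card T
          else (Fintype.card J : ℝ) / (Fintype.card T : ℝ) ^ 2 := by
      intro i
      by_cases h : F i m₁ = F i m₂
      · simp only [h, if_pos]
        rw [← hSU2a (F i m₂) t₁]
        have hsub : (univ.filter fun j => H j (F i m₂) = t₁ ∧ H j (F i m₂) = t₂)
            ⊆ univ.filter fun j => H j (F i m₂) = t₁ := by
          intro j hj
          simp only [Finset.mem_filter] at hj ⊢
          exact ⟨hj.1, hj.2.1⟩
        exact_mod_cast Finset.card_le_card hsub
      · simp only [h, if_neg, not_false_iff]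
        exact le_of_eq (hSU2b _ _ t₁ t₂ h)
    have hsum := Finset.sum_le_sum (fun i (_ : i ∈ univ) => hbound i)
    refine le_trans hsum ?_
    rw [Finset.sum_ite, Finset.sum_const, Finset.sum_const, nsmul_eq_mul, nsmul_eq_mul]
    set k : ℝ := ((univ.filter fun i => F i m₁ = F i m₂).card : ℝ) with hk
    have hk0 : (0 : ℝ) ≤ k := by positivity
    have hkI : k ≤ ε' * Fintype.card I := hAU2 m₁ m₂ hm
    have hcompl : ((univ.filter fun i => ¬ F i m₁ = F i m₂).card : ℝ)
        = (Fintype.card I : ℝ) - k := by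
      have := Finset.card_filter_add_card_filter_not
        (s := (univ : Finset I)) (p := fun i => F i m₁ = F i m₂)
      rw [Finset.card_univ] at this
      have : ((univ.filter fun i => F i m₁ = F i m₂).card : ℝ)
          + ((univ.filter fun i => ¬ F i m₁ = F i m₂).card : ℝ)
          = (Fintype.card I : ℝ) := by exact_mod_cast this
      linarith
    rw [hcompl]
    have hTpos : (0 : ℝ) < Fintype.card T := by linarith
    set x : ℝ := (Fintype.card T : ℝ) with hx
    set nI : ℝ := (Fintype.card I : ℝ) with hnI
    set nJ : ℝ := (Fintype.card J : ℝ) with hnJ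
    have hxne : x ≠ 0 := ne_of_gt hTpos
    have e1 : k * (nJ / x) + (nI - k) * (nJ / x ^ 2)
        = (k * x * nJ + (nI - k) * nJ) / x ^ 2 := by field_simp
    have e2 : (ε' * (1 - 1 / x) + 1 / x) * (nI * nJ) / x
        = ((ε' * (x - 1) + 1) * (nI * nJ)) / x ^ 2 := by
      field_simp
    rw [e1, e2, div_le_div_iff₀ (by positivity) (by positivity)]
    nlinarith [mul_nonneg (mul_nonneg (le_of_lt (pow_pos hTpos 2))
      (sub_nonneg.2 hkI)) (mul_nonneg hJ (sub_nonneg.2 hT))]
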